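/- Let n_a, n_b, n_c ≥ 0. For every linear order ≤ on the vertex set of Q(n_a, n_b, n_c), Condition (1) holds for (Q(n_a, n_b, n_c), ≤); that is, for all paths p: i → k and q: j → k with i < k < j such that every vertex passed through by p is ≤ k, there exists a path r: j → i with q = p ∘ r. -/

import Mathlib

/-- The vertex set of the quiver `Q(n_a, n_b, n_c)`: vertices `a 0, …, a n_a`,
`b 0, …, b (n_b - 1)` (representing `b_1, …, b_{n_b}`) and
`c 0, …, c (n_c - 1)` (representing `c_1, …, c_{n_c}`). -/
inductive QV (na nb nc : ℕ) : Type where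
  | a : Fin (na + 1) → QV na nb nc
  | b : Fin nb → QV na nb nc
  | c : Fin nc → QV na nb nc

/-- The arrow relation of `Q(n_a, n_b, n_c)`: arrows `a_i → a_{i-1}`, `a_0 → b_1`,
`b_i → b_{i+1}`, `a_0 → c_1`, `c_i → c_{i+1}`. -/
def qrel {na nb nc : ℕ} : QV na nb nc → QV na nb nc → Prop
  | .a i, .a j => (i : ℕ) = (j : ℕ) + 1
  | .a i, .b j => (i : ℕ) = 0 ∧ (j : ℕ) = 0
  | .a i, .c j => (i : ℕ) = 0 ∧ (j : ℕ) = 0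
  | .b i, .b j => (j : ℕ) = (i : ℕ) + 1
  | .c i, .c j => (j : ℕ) = (i : ℕ) + 1
  | _, _ => False

/-- The quiver `Q(n_a, n_b, n_c)`. -/
instance {na nb nc : ℕ} : Quiver (QV na nb nc) :=
  ⟨fun u v => PLift (qrel u v)⟩

open Quiver

/-- The path `p` passes through the vertex `k`. -/
def PassesThrough {V : Type*} [Quiver V] {a b : V} (p : Path a b) (k : V) : Prop :=
  ∃ (v : Path a k) (u : Path k b), v.comp u = p

/-- `k` is an inner vertex of `p`. -/
def IsInnerVertex {V : Type*} [Quiver V] {a b : V} (p : Path a b) (k : V) : Prop :=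
  ∃ (v : Path a k) (u : Path k b), v.length ≠ 0 ∧ u.length ≠ 0 ∧ v.comp u = p

/-- A nontrivial path `p : i → j` is right-minimal directed if `i < j` and every inner
vertex `k` of `p` satisfies `k ≤ i`. -/
def IsRMD {V : Type*} [Quiver V] [LinearOrder V] {i j : V} (p : Path i j) : Prop :=
  p.length ≠ 0 ∧ i < j ∧ ∀ k, IsInnerVertex p k → k ≤ i

/-- Condition (1): for all paths `p : i → k` and `q : j → k` with `i < k < j` such that
every vertex passed through by `p` is `≤ k`, there is a path `r : j → i` with `q = p ∘ r`. -/
def Cond1 (V : Type*) [Quiver V] [LinearOrder V] : Prop :=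
  ∀ (i k j : V) (p : Path i k) (q : Path j k),
    i < k → k < j → (∀ m, PassesThrough p m → m ≤ k) →
    ∃ r : Path j i, r.comp p = q

/-- Condition (2): for every path `q : j → i` with `i < j`, there is at most one
right-minimal directed path `p` with source `i` and target `< j`. -/
def Cond2 (V : Type*) [Quiver V] [LinearOrder V] : Prop :=
  ∀ i j : V, i < j → Nonempty (Path j i) →
    ∀ (k k' : V) (p : Path i k) (p' : Path i k'),
      IsRMD p → IsRMD p' → k < j → k' < j → k = k' ∧ HEq p p' 

/-- Condition (1) holds for `Q(n_a, n_b, n_c)` with any linear order on its vertices. -/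

lemma qrel_unique {na nb nc : ℕ} {x y k : QV na nb nc} (h : qrel x k) (h' : qrel y k) :
    x = y := by
  cases x <;> cases y <;> cases k <;>
    simp_all [qrel, Fin.ext_iff, -Fin.val_eq_zero_iff]

lemma path_compare {na nb nc : ℕ} {u k : QV na nb nc} (p : Path u k) :
    ∀ {v : QV na nb nc} (q : Path v k),
      (∃ r : Path v u, r.comp p = q) ∨ (∃ s : Path u v, s.comp q = p) := by
  induction p with
  | nil =>
    intro v q
    exact Or.inl ⟨q, rfl⟩
  | cons p' f ih =>
    intro v q
    cases q with
    | nil => exact Or.inr ⟨p'.cons f, rfl⟩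
    | cons q' e =>
      have hw := qrel_unique e.down f.down
      subst hw
      have he : e = f := by change PLift _ at e f; cases e; cases f; rfl
      subst he
      rcases ih q' with ⟨r, hr⟩ | ⟨s, hs⟩
      · exact Or.inl ⟨r, by simp [Path.comp_cons, hr]⟩
      · exact Or.inr ⟨s, by simp [Path.comp_cons, hs]⟩

theorem stmt_12 (na nb nc : ℕ) [LinearOrder (QV na nb nc)] :
    Cond1 (QV na nb nc) := by
  intro i k j p q hik hkj hpass
  rcases path_compare p q with ⟨r, hr⟩ | ⟨s, hs⟩
  · exact ⟨r, hr⟩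
  · exact absurd (hpass j ⟨s, q, hs⟩) (not_le.mpr hkj)
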